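/- Let n ≥ 1, let A₁,…,Aₙ be Hermitian positive definite d×d complex matrices, and let w₁,…,wₙ be nonnegative reals with Σᵢ wᵢ = 1. Then (Σᵢ wᵢ Aᵢ)⁻¹ ≤ Σᵢ wᵢ Aᵢ⁻¹ in the Loewner order; that is, Σᵢ wᵢ Aᵢ⁻¹ − (Σᵢ wᵢ Aᵢ)⁻¹ is positive semidefinite. The matrices A₁,…,Aₙ are not assumed to commute. -/

import Mathlib

open Matrix
open scoped ComplexOrder

private lemma smul_posSemidef {m : Type*} [Fintype m] {c : ℝ} (hc : 0 ≤ c)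
    {M : Matrix m m ℂ} (hM : M.PosSemidef) :
    ((c : ℂ) • M).PosSemidef := by
  rw [posSemidef_iff_dotProduct_mulVec]
  constructor
  · unfold Matrix.IsHermitian
    rw [conjTranspose_smul, hM.1]
    simp
  · intro x
    rw [smul_mulVec, dotProduct_smul, smul_eq_mul]
    exact mul_nonneg (by exact_mod_cast hc) ((posSemidef_iff_dotProduct_mulVec.mp hM).2 x)

private lemma smul_posDef {m : Type*} [Fintype m] {c : ℝ} (hc : 0 < c)
    {M : Matrix m m ℂ} (hM : M.PosDef) :
    ((c : ℂ) • M).PosDef := by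
  rw [posDef_iff_dotProduct_mulVec]
  constructor
  · unfold Matrix.IsHermitian
    rw [conjTranspose_smul, hM.1]
    simp
  · intro x hx
    rw [smul_mulVec, dotProduct_smul, smul_eq_mul]
    exact mul_pos (by exact_mod_cast hc) ((posDef_iff_dotProduct_mulVec.mp hM).2 hx)

private lemma sum_posSemidef {m : Type*} [Fintype m] {ι : Type*} (s : Finset ι)
    (f : ι → Matrix m m ℂ) (hf : ∀ i ∈ s, (f i).PosSemidef) :
    (∑ i ∈ s, f i).PosSemidef := by
  classical
  induction s using Finset.induction_on with
  | empty => simpa using Matrix.PosSemidef.zero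
  | insert _ _ hnotmem ih =>
    rw [Finset.sum_insert hnotmem]
    exact (hf _ (Finset.mem_insert_self _ _)).add
      (ih fun i hi => hf i (Finset.mem_insert_of_mem hi))


private lemma sum_fromBlocks {α : Type*} [AddCommMonoid α] {n m : ℕ} {ι : Type*} (s : Finset ι)
    (f g h k : ι → Matrix (Fin n) (Fin m) α) :
    ∑ i ∈ s, fromBlocks (f i) (g i) (h i) (k i) =
      fromBlocks (∑ i ∈ s, f i) (∑ i ∈ s, g i) (∑ i ∈ s, h i) (∑ i ∈ s, k i) := by
  classical
  induction s using Finset.induction_on with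
  | empty => simp
  | insert _ _ hnotmem ih => simp [Finset.sum_insert hnotmem, ih, fromBlocks_add]

/-- Weighted arithmetic–harmonic mean inequality for Hermitian positive definite matrices
(not assumed to commute), in the Loewner order:
`(Σᵢ wᵢ Aᵢ)⁻¹ ≤ Σᵢ wᵢ Aᵢ⁻¹`. -/
theorem matrix_arith_harmonic (n d : ℕ) (hn : 1 ≤ n)
    (A : Fin n → Matrix (Fin d) (Fin d) ℂ) (hA : ∀ i, (A i).PosDef)
    (w : Fin n → ℝ) (hw : ∀ i, 0 ≤ w i) (hws : ∑ i, w i = 1) :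
    (∑ i, (w i : ℂ) • (A i)⁻¹ - (∑ i, (w i : ℂ) • A i)⁻¹).PosSemidef := by
  classical
  set S : Matrix (Fin d) (Fin d) ℂ := ∑ i, (w i : ℂ) • A i with hSdef
  set T : Matrix (Fin d) (Fin d) ℂ := ∑ i, (w i : ℂ) • (A i)⁻¹ with hTdef
  -- some weight is positive
  obtain ⟨j, hj⟩ : ∃ j, 0 < w j := by
    by_contra h
    push_neg at h
    have : ∀ i, w i = 0 := fun i => le_antisymm (h i) (hw i)
    simp [this] at hws
  -- S is positive definite
  have hS : S.PosDef := by
    rw [hSdef, ← Finset.add_sum_erase _ _ (Finset.mem_univ j)]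
    exact (smul_posDef hj (hA j)).add_posSemidef
      (sum_posSemidef _ _ fun i _ => smul_posSemidef (hw i) (hA i).posSemidef)
  haveI : Invertible S := hS.isUnit.invertible
  have hws' : ∑ i, (w i : ℂ) = 1 := by exact_mod_cast hws
  -- the block matrix [S 1; 1 T] is positive semidefinite
  have hblock : (fromBlocks S 1 (1 : Matrix (Fin d) (Fin d) ℂ) T).PosSemidef := by
    have heq : fromBlocks S 1 (1 : Matrix (Fin d) (Fin d) ℂ) T =
        ∑ i, (w i : ℂ) • fromBlocks (A i) 1 1 (A i)⁻¹ := by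
      simp only [fromBlocks_smul, sum_fromBlocks, ← Finset.sum_smul, hws', one_smul]
      rfl
    rw [heq]
    apply sum_posSemidef
    intro i _
    apply smul_posSemidef (hw i)
    haveI : Invertible (A i) := (hA i).isUnit.invertible
    have h1 : (1 : Matrix (Fin d) (Fin d) ℂ)ᴴ = 1 := conjTranspose_one
    rw [show (fromBlocks (A i) 1 1 (A i)⁻¹) =
        (fromBlocks (A i) 1 (1 : Matrix (Fin d) (Fin d) ℂ)ᴴ (A i)⁻¹) by rw [h1]]
    rw [Matrix.PosDef.fromBlocks₁₁ _ _ (hA i)]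
    simpa using Matrix.PosSemidef.zero
  -- Schur complement
  have h1 : (1 : Matrix (Fin d) (Fin d) ℂ)ᴴ = 1 := conjTranspose_one
  rw [show (fromBlocks S 1 (1 : Matrix (Fin d) (Fin d) ℂ) T) =
      (fromBlocks S 1 (1 : Matrix (Fin d) (Fin d) ℂ)ᴴ T) by rw [h1]] at hblock
  have := (Matrix.PosDef.fromBlocks₁₁ _ _ hS).mp hblock
  simpa using this
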